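/- If f: Z → X = R^D is a stochastic generator f(z) = μ(z) + σ(z) ⊙ ε with ε ~ N(0, I_D), and μ, σ are differentiable, then the expectation over ε of the random metric M_z = J_z^T J_z (where J_z is the Jacobian of f at z) equals (J^μ_z)^T (J^μ_z) + (J^σ_z)^T (J^σ_z), where J^μ_z and J^σ_z are the Jacobians of μ and σ. -/

import Mathlib

open MeasureTheory ProbabilityTheory Matrix

section AuxGaussian

open Real Filter Set
open scoped NNReal ENNReal

noncomputable def φg : ℝ → ℝ := fun x => Real.exp (-2⁻¹ * x ^ 2)

lemma φg_int : Integrable φg := integrable_exp_neg_mul_sq (by norm_num)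

lemma xφg_int : Integrable (fun x => x * φg x) := integrable_mul_exp_neg_mul_sq (by norm_num)

lemma x2φg_int : Integrable (fun x => x ^ 2 * φg x) := by
  have h := integrable_rpow_mul_exp_neg_mul_sq (b := 2⁻¹) (by norm_num) (s := 2) (by norm_num)
  simpa [φg, Real.rpow_two] using h

lemma φg_deriv (x : ℝ) : HasDerivAt φg (-x * φg x) x := by
  have h := ((hasDerivAt_pow 2 x).const_mul (-2⁻¹ : ℝ)).exp
  exact h.congr_deriv (by simp only [φg]; norm_num; ring)

lemma φg_moment1 : ∫ x : ℝ, x * φg x = 0 := by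
  have hd : ∀ x : ℝ, HasDerivAt (fun x => -φg x) (x * φg x) x := by
    intro x
    have := (φg_deriv x).neg
    exact this.congr_deriv (by ring)
  exact integral_eq_zero_of_hasDerivAt_of_integrable hd xφg_int φg_int.neg

lemma φg_moment2 : ∫ x : ℝ, x ^ 2 * φg x = Real.sqrt (2 * π) := by
  have hd : ∀ x : ℝ, HasDerivAt (fun x => -(x * φg x)) (x ^ 2 * φg x - φg x) x := by
    intro x
    have := ((hasDerivAt_id x).mul (φg_deriv x)).neg
    simp only [id_eq] at this
    exact this.congr_deriv (by ring)
  have h0 : ∫ x : ℝ, (x ^ 2 * φg x - φg x) = 0 :=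
    integral_eq_zero_of_hasDerivAt_of_integrable hd (x2φg_int.sub φg_int) xφg_int.neg
  rw [integral_sub x2φg_int φg_int] at h0
  have hφ : ∫ x : ℝ, φg x = Real.sqrt (2 * π) := by
    have := integral_gaussian 2⁻¹
    rw [show π / 2⁻¹ = 2 * π by ring] at this
    simpa [φg] using this
  linarith

lemma gauss_pdf_eq (x : ℝ) : gaussianPDFReal 0 1 x = (Real.sqrt (2 * π))⁻¹ * φg x := by
  simp only [gaussianPDFReal, φg, NNReal.coe_one, mul_one, sub_zero]
  congr 1
  ring

noncomputable def gaussPdfNN : ℝ → ℝ≥0 := fun x => (gaussianPDFReal 0 1 x).toNNReal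

lemma gaussPdfNN_meas : Measurable gaussPdfNN := (measurable_gaussianPDFReal 0 1).real_toNNReal

lemma gauss_eq_withDensity :
    gaussianReal 0 1 = MeasureTheory.volume.withDensity fun x => ((gaussPdfNN x : ℝ≥0∞)) := by
  rw [gaussianReal_of_var_ne_zero 0 one_ne_zero]
  rfl

lemma gaussPdfNN_smul_eq (g : ℝ → ℝ) (x : ℝ) :
    (gaussPdfNN x : ℝ) • g x = (Real.sqrt (2 * π))⁻¹ * (g x * φg x) := by
  rw [smul_eq_mul]
  rw [show ((gaussPdfNN x : ℝ)) = gaussianPDFReal 0 1 x from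
    Real.coe_toNNReal _ (gaussianPDFReal_nonneg 0 1 x)]
  rw [gauss_pdf_eq]; ring

lemma gauss_integrable {g : ℝ → ℝ} (hg : Integrable (fun x => g x * φg x)) :
    Integrable g (gaussianReal 0 1) := by
  rw [gauss_eq_withDensity, integrable_withDensity_iff_integrable_smul gaussPdfNN_meas]
  have : (fun x => gaussPdfNN x • g x) = fun x => (Real.sqrt (2 * π))⁻¹ * (g x * φg x) := by
    funext x; exact gaussPdfNN_smul_eq g x
  rw [this]
  exact hg.const_mul _

lemma gauss_integral (g : ℝ → ℝ) :
    ∫ x, g x ∂(gaussianReal 0 1) = (Real.sqrt (2 * π))⁻¹ * ∫ x, g x * φg x := by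
  rw [gauss_eq_withDensity, integral_withDensity_eq_integral_smul gaussPdfNN_meas]
  rw [show (fun x => gaussPdfNN x • g x) = fun x => (Real.sqrt (2 * π))⁻¹ * (g x * φg x) from
    funext fun x => gaussPdfNN_smul_eq g x]
  rw [integral_const_mul]

lemma gauss_m1 : ∫ x, x ∂(gaussianReal 0 1) = 0 := by
  rw [gauss_integral]
  simp [φg_moment1]

lemma gauss_m2 : ∫ x, x ^ 2 ∂(gaussianReal 0 1) = 1 := by
  rw [gauss_integral, φg_moment2]
  rw [inv_mul_cancel₀]
  positivity

lemma gauss_i1 : Integrable (fun x : ℝ => x) (gaussianReal 0 1) := gauss_integrable xφg_int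

lemma gauss_i2 : Integrable (fun x : ℝ => x ^ 2) (gaussianReal 0 1) := gauss_integrable x2φg_int

lemma map_eval_pi' {ι : Type*} [Fintype ι] {α : ι → Type*} [∀ i, MeasurableSpace (α i)]
    (μ : ∀ i, Measure (α i)) [∀ i, IsProbabilityMeasure (μ i)] (k : ι) :
    Measure.map (Function.eval k) (Measure.pi μ) = μ k := by
  classical
  ext s hs
  rw [Measure.map_apply (measurable_pi_apply k) hs, Set.eval_preimage, Measure.pi_pi]
  rw [Finset.prod_eq_single k]
  · simp
  · intro i _ hik
    simp [Function.update_of_ne hik]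
  · simp

end AuxGaussian

/-- For the stochastic generator `f(z) = μ(z) + σ(z) ⊙ ε` with
`ε ~ N(0, I_D)` and `μ, σ` differentiable, the expectation over `ε` of the random
metric `M_z = J_zᵀ J_z` (with `J_z = J^μ_z + B(ε)`, where column `i` of `B(ε)` is
`diag(∂σ/∂z_i) ε`) equals `(J^μ_z)ᵀ (J^μ_z) + (J^σ_z)ᵀ (J^σ_z)`. -/
theorem expected_metric
    {d D : ℕ} (μ σ : (Fin d → ℝ) → (Fin D → ℝ)) (z : Fin d → ℝ)
    (hμ : DifferentiableAt ℝ μ z) (hσ : DifferentiableAt ℝ σ z)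
    {Ω : Type*} [MeasurableSpace Ω] (P : Measure Ω) [IsProbabilityMeasure P]
    (ε : Ω → Fin D → ℝ) (hεm : Measurable ε)
    (hε : Measure.map ε P = Measure.pi fun _ : Fin D => gaussianReal 0 1)
    (Jμ Jσ : Matrix (Fin D) (Fin d) ℝ)
    (hJμ : ∀ i j, Jμ i j = fderiv ℝ μ z (Pi.single j 1) i)
    (hJσ : ∀ i j, Jσ i j = fderiv ℝ σ z (Pi.single j 1) i)
    (J : (Fin D → ℝ) → Matrix (Fin D) (Fin d) ℝ)
    (hJ : ∀ e i j, J e i j = Jμ i j + Jσ i j * e i) :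
    ∀ i j, (∫ ω, ((J (ε ω))ᵀ * (J (ε ω))) i j ∂P)
      = (Jμᵀ * Jμ + Jσᵀ * Jσ) i j := by
  intro i j
  have hmapk : ∀ k : Fin D, Measure.map (fun ω => ε ω k) P = gaussianReal 0 1 := by
    intro k
    have h1 : (fun ω => ε ω k) = Function.eval k ∘ ε := rfl
    rw [h1, ← Measure.map_map (measurable_pi_apply k) hεm, hε,
      map_eval_pi' (fun _ : Fin D => gaussianReal 0 1) k]
  have hεk : ∀ k : Fin D, Measurable fun ω => ε ω k :=
    fun k => (measurable_pi_apply k).comp hεm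
  have intX : ∀ k, Integrable (fun ω => ε ω k) P := by
    intro k
    have h := gauss_i1
    rw [← hmapk k] at h
    exact (integrable_map_measure measurable_id.aestronglyMeasurable
      (hεk k).aemeasurable).mp h
  have intX2 : ∀ k, Integrable (fun ω => (ε ω k) ^ 2) P := by
    intro k
    have h := gauss_i2
    rw [← hmapk k] at h
    exact (integrable_map_measure (measurable_id.pow_const 2).aestronglyMeasurable
      (hεk k).aemeasurable).mp h
  have iX : ∀ k, ∫ ω, ε ω k ∂P = 0 := by
    intro k
    have h := integral_map (μ := P) (φ := fun ω => ε ω k) (hεk k).aemeasurable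
      (f := fun x : ℝ => x) measurable_id.aestronglyMeasurable
    rw [hmapk k] at h
    rw [← h, gauss_m1]
  have iX2 : ∀ k, ∫ ω, (ε ω k) ^ 2 ∂P = 1 := by
    intro k
    have h := integral_map (μ := P) (φ := fun ω => ε ω k) (hεk k).aemeasurable
      (f := fun x : ℝ => x ^ 2) (measurable_id.pow_const 2).aestronglyMeasurable
    rw [hmapk k] at h
    rw [← h, gauss_m2]
  set F : Fin D → Ω → ℝ :=
    fun k ω => (Jμ k i + Jσ k i * ε ω k) * (Jμ k j + Jσ k j * ε ω k) with hF
  have hFeq : ∀ k, F k = fun ω => Jμ k i * Jμ k j +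
      ((Jμ k i * Jσ k j + Jσ k i * Jμ k j) * ε ω k + Jσ k i * Jσ k j * (ε ω k) ^ 2) := by
    intro k; funext ω; simp only [hF]; ring
  have hFint : ∀ k, Integrable (F k) P := by
    intro k
    simp only [hFeq]
    exact (integrable_const _).add
      (((intX k).const_mul _).add ((intX2 k).const_mul _))
  have hFval : ∀ k, ∫ ω, F k ω ∂P = Jμ k i * Jμ k j + Jσ k i * Jσ k j := by
    intro k
    simp only [hFeq]
    have h1 : Integrable (fun ω => (Jμ k i * Jσ k j + Jσ k i * Jμ k j) * ε ω k) P :=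
      (intX k).const_mul _
    have h2 : Integrable (fun ω => Jσ k i * Jσ k j * ε ω k ^ 2) P :=
      (intX2 k).const_mul _
    have h12 : Integrable (fun ω => (Jμ k i * Jσ k j + Jσ k i * Jμ k j) * ε ω k +
        Jσ k i * Jσ k j * ε ω k ^ 2) P := h1.add h2
    rw [integral_add (integrable_const _) h12, integral_add h1 h2]
    simp [integral_const_mul, iX k, iX2 k]
  have hLHS : (fun ω => ((J (ε ω))ᵀ * (J (ε ω))) i j) = fun ω => ∑ k, F k ω := by
    funext ω
    simp only [Matrix.mul_apply, Matrix.transpose_apply, hJ, hF]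
  rw [hLHS, integral_finset_sum _ (fun k _ => hFint k)]
  simp only [hFval, Matrix.add_apply, Matrix.mul_apply, Matrix.transpose_apply,
    Finset.sum_add_distrib]
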